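/- For every positive integer n, Σ_{1≤a≤b≤n-1} (1/6)(1/25)^{a-1}·(5/3)(1/25)^{n-b}·(4b-4a+1)(1/25)^{b-a} + Σ_{a=1}^{n} (1/6)(1/25)^{a-1}·(4n-4a+1)(1/25)^{n-a} = ((20n^3-9n^2+7n)/108)(1/25)^{n-1}. -/

import Mathlib

lemma sumIcc_id' (b : ℕ) : ∑ a ∈ Finset.Icc 1 b, (a : ℚ) = b * (b + 1) / 2 := by
  induction b with
  | zero => simp
  | succ m ih =>
    rw [Finset.sum_Icc_succ_top (Nat.succ_le_succ (Nat.zero_le _)), ih]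
    push_cast
    ring

lemma sum_outer' (m : ℕ) :
    ∑ b ∈ Finset.Icc 1 m, (2 * (b : ℚ) ^ 2 - b) = (m : ℚ) * ((m : ℚ) + 1) * (4 * (m : ℚ) - 1) / 6 := by
  induction m with
  | zero => simp
  | succ k ih =>
    rw [Finset.sum_Icc_succ_top (Nat.succ_le_succ (Nat.zero_le _)), ih]
    push_cast
    ring

lemma sum_inner' (b : ℕ) :
    ∑ a ∈ Finset.Icc 1 b, (4 * (b : ℚ) - 4 * a + 1) = 2 * b ^ 2 - b := by
  have h1 : ∑ a ∈ Finset.Icc 1 b, (4 * (b : ℚ) - 4 * a + 1)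
      = ∑ a ∈ Finset.Icc 1 b, ((4 * (b : ℚ) + 1) - 4 * (a : ℚ)) :=
    Finset.sum_congr rfl (fun a _ => by ring)
  rw [h1, Finset.sum_sub_distrib, Finset.sum_const, ← Finset.mul_sum, sumIcc_id',
    Nat.card_Icc, Nat.add_sub_cancel, nsmul_eq_mul]
  ring

/-- `K_{0,1} = ∑_{1 ≤ a ≤ b ≤ n-1} (1/6)(1/25)^{a-1}·(5/3)(1/25)^{n-b}·(4b-4a+1)(1/25)^{b-a}
    + ∑_{a=1}^{n} (1/6)(1/25)^{a-1}·(4n-4a+1)(1/25)^{n-a} = ((20n³-9n²+7n)/108)(1/25)^{n-1}`. -/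
theorem K01_identity (n : ℕ) (hn : 0 < n) :
    (∑ b ∈ Finset.Icc 1 (n - 1), ∑ a ∈ Finset.Icc 1 b,
        (1 / 6 : ℚ) * (1 / 25) ^ (a - 1) * (5 / 3 * (1 / 25) ^ (n - b)) *
          ((4 * (b : ℚ) - 4 * a + 1) * (1 / 25) ^ (b - a)))
      + ∑ a ∈ Finset.Icc 1 n,
        (1 / 6 : ℚ) * (1 / 25) ^ (a - 1) * ((4 * (n : ℚ) - 4 * a + 1) * (1 / 25) ^ (n - a))
      = (20 * (n : ℚ) ^ 3 - 9 * n ^ 2 + 7 * n) / 108 * (1 / 25) ^ (n - 1) := by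
  have key1 : ∀ b ∈ Finset.Icc 1 (n - 1),
      (∑ a ∈ Finset.Icc 1 b,
        (1 / 6 : ℚ) * (1 / 25) ^ (a - 1) * (5 / 3 * (1 / 25) ^ (n - b)) *
          ((4 * (b : ℚ) - 4 * a + 1) * (1 / 25) ^ (b - a)))
      = 5 / 18 * (1 / 25 : ℚ) ^ (n - 1) * (2 * (b : ℚ) ^ 2 - b) := by
    intro b hb
    simp only [Finset.mem_Icc] at hb
    have hstep : ∀ a ∈ Finset.Icc 1 b,
        (1 / 6 : ℚ) * (1 / 25) ^ (a - 1) * (5 / 3 * (1 / 25) ^ (n - b)) *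
          ((4 * (b : ℚ) - 4 * a + 1) * (1 / 25) ^ (b - a))
        = 5 / 18 * (1 / 25 : ℚ) ^ (n - 1) * (4 * (b : ℚ) - 4 * a + 1) := by
      intro a ha
      simp only [Finset.mem_Icc] at ha
      have hE : (a - 1) + ((n - b) + (b - a)) = n - 1 := by omega
      rw [← hE, pow_add, pow_add]
      ring
    rw [Finset.sum_congr rfl hstep, ← Finset.mul_sum, sum_inner']
  have key2 : ∀ a ∈ Finset.Icc 1 n,
      (1 / 6 : ℚ) * (1 / 25) ^ (a - 1) * ((4 * (n : ℚ) - 4 * a + 1) * (1 / 25) ^ (n - a))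
      = 1 / 6 * (1 / 25 : ℚ) ^ (n - 1) * (4 * (n : ℚ) - 4 * a + 1) := by
    intro a ha
    simp only [Finset.mem_Icc] at ha
    have hE : (a - 1) + (n - a) = n - 1 := by omega
    rw [← hE, pow_add]
    ring
  rw [Finset.sum_congr rfl key1, Finset.sum_congr rfl key2, ← Finset.mul_sum,
    ← Finset.mul_sum, sum_outer', sum_inner']
  have hcast : ((n - 1 : ℕ) : ℚ) = (n : ℚ) - 1 := by
    push_cast [Nat.cast_sub hn]
    ring
  rw [hcast]
  ring
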